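/- There is no 2-edge-coloring c of a 3-uniform hairy odd cycle C whose color-blind partitions form a proper coloring on the cycle vertices. That is, if every cycle vertex of an odd cycle has exactly one pendant edge (degree 3), then for any 2-edge-coloring some two adjacent cycle vertices v, v' satisfy c*(v) = c*(v'). -/

import Mathlib

open Finset

/-- The color-blind partition of `v`: the multiset of (nonzero) counts of incident
edges of each color, i.e. the partition of `deg v` with trailing zeroes removed. -/
def cbp {V : Type*} [Fintype V] [DecidableEq V] (G : SimpleGraph V) [DecidableRel G.Adj]
    {k : ℕ} (c : Sym2 V → Fin k) (v : V) : Multiset ℕ :=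
  (((Finset.univ : Finset (Fin k)).val.map fun i =>
    ((G.neighborFinset v).filter fun w => c s(v, w) = i).card).filter fun m => m ≠ 0)

/-- `c` is a color-blind distinguishing edge-coloring of `G`. -/
def IsCBD {V : Type*} [Fintype V] [DecidableEq V] (G : SimpleGraph V) [DecidableRel G.Adj]
    {k : ℕ} (c : Sym2 V → Fin k) : Prop :=
  ∀ u v : V, G.Adj u v → cbp G c u ≠ cbp G c v

/-- Cycle and pendant edges of the 3-uniform hairy cycle: vertex `(j, false)` is the cycle
vertex `v_j` and `(j, true)` is its pendant neighbor `u_j`. -/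
def hairyRel (n : ℕ) (p q : Fin n × Bool) : Prop :=
  (p.2 = false ∧ q.2 = false ∧ (p.1.val + 1) % n = q.1.val) ∨
  (p.1 = q.1 ∧ p.2 = false ∧ q.2 = true)

instance (n : ℕ) : DecidableRel (hairyRel n) := fun p q => by unfold hairyRel; infer_instance

/-- The 3-uniform hairy cycle on `n` cycle vertices. -/
def hairyCycle (n : ℕ) : SimpleGraph (Fin n × Bool) where
  Adj p q := p ≠ q ∧ (hairyRel n p q ∨ hairyRel n q p)
  symm := ⟨fun p q h => ⟨h.1.symm, h.2.symm⟩⟩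
  loopless := ⟨fun p h => h.1 rfl⟩

instance (n : ℕ) : DecidableRel (hairyCycle n).Adj := fun p q =>
  inferInstanceAs (Decidable (p ≠ q ∧ (hairyRel n p q ∨ hairyRel n q p)))


section
variable {n : ℕ} [NeZero n] (h3 : 3 ≤ n)

include h3 in
lemma val1' : (1 : Fin n).val = 1 := by
  rw [Fin.val_one']; exact Nat.mod_eq_of_lt (by omega)

include h3 in
lemma one_ne' (j : Fin n) : j ≠ j + 1 := by
  intro h
  have h0 : (1 : Fin n) = 0 := left_eq_add.mp h
  rw [Fin.ext_iff, val1' h3, Fin.val_zero] at h0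
  exact one_ne_zero h0

lemma hadj {p q : Fin n × Bool} : (hairyCycle n).Adj p q ↔
    p ≠ q ∧ (hairyRel n p q ∨ hairyRel n q p) := Iff.rfl

include h3 in
lemma nbhd (j : Fin n) : (hairyCycle n).neighborFinset (j, false) =
    {(j - 1, false), (j + 1, false), (j, true)} := by
  have addone : ∀ a q : Fin n, (a.val + 1) % n = q.val ↔ q = a + 1 := by
    intro a q; rw [Fin.ext_iff, Fin.val_add, val1' h3]; exact comm
  have subone : ∀ a q : Fin n, (q.val + 1) % n = a.val ↔ q = a - 1 := by
    intro a q
    rw [show (q = a - 1 ↔ q + 1 = a) from by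
      constructor <;> intro h <;> [(rw [h, sub_add_cancel]); (rw [← h, add_sub_cancel_right])]]
    rw [Fin.ext_iff, Fin.val_add, val1' h3]
  ext ⟨q, b⟩
  rw [SimpleGraph.mem_neighborFinset, hadj]
  simp only [mem_insert, mem_singleton]
  constructor
  · rintro ⟨hne, h⟩
    simp only [hairyRel] at h
    rcases h with (⟨-, h2, h⟩ | ⟨h1, -, h2⟩) | (⟨h2, -, h⟩ | ⟨-, -, hf⟩)
    · rw [addone] at h
      exact Or.inr (Or.inl (by rw [h, h2]))
    · exact Or.inr (Or.inr (by rw [← h1, h2]))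
    · rw [subone] at h
      exact Or.inl (by rw [h, h2])
    · exact absurd hf (by simp)
  · have hsub : j ≠ j - 1 := by
      intro h
      have : j + 1 = j := by conv_lhs => rw [h, sub_add_cancel]
      exact one_ne' h3 j this.symm
    rintro (h | h | h)
    · rw [h]
      refine ⟨by simpa using hsub, Or.inr (Or.inl ⟨rfl, rfl, ?_⟩)⟩
      exact (subone j (j - 1)).mpr rfl
    · rw [h]
      refine ⟨by simpa using one_ne' h3 j, Or.inl (Or.inl ⟨rfl, rfl, ?_⟩)⟩
      exact (addone j (j + 1)).mpr rfl
    · rw [h]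
      exact ⟨by simp, Or.inl (Or.inr ⟨rfl, rfl, rfl⟩)⟩

include h3 in
lemma deg3 (j : Fin n) : ((hairyCycle n).neighborFinset (j, false)).card = 3 := by
  rw [nbhd h3 j]
  have hsub : j ≠ j - 1 := by
    intro h
    have : j + 1 = j := by conv_lhs => rw [h, sub_add_cancel]
    exact one_ne' h3 j this.symm
  have h2 : j - 1 ≠ j + 1 := by
    intro h
    have h2 : j = j + (1 + 1) := by rw [← add_assoc, ← h, sub_add_cancel]
    have h0 : (1 + 1 : Fin n) = 0 := left_eq_add.mp h2
    rw [Fin.ext_iff, Fin.val_add, val1' h3, Fin.val_zero] at h0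
    rw [Nat.mod_eq_of_lt (by omega)] at h0
    omega
  rw [card_insert_of_notMem (by simp [h2]), card_insert_of_notMem (by simp), card_singleton]
end

section
variable {n : ℕ} [NeZero n] (h3 : 3 ≤ n)

include h3 in
lemma adj_succ (j : Fin n) : (hairyCycle n).Adj (j, false) (j + 1, false) := by
  rw [← SimpleGraph.mem_neighborFinset, nbhd h3 j]
  simp

include h3 in
lemma cbp_cases (c : Sym2 (Fin n × Bool) → Fin 2) (j : Fin n) :
    cbp (hairyCycle n) c (j, false) = ({3} : Multiset ℕ) ∨
      cbp (hairyCycle n) c (j, false) = ({1, 2} : Multiset ℕ) := by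
  set v := ((j, false) : Fin n × Bool) with hv
  set s := (hairyCycle n).neighborFinset v with hs
  set a := (s.filter fun w => c s(v, w) = 0).card with ha
  set b := (s.filter fun w => c s(v, w) = 1).card with hb
  have hab : a + b = 3 := by
    have hcomp : s.filter (fun w => c s(v, w) = 1) =
        s.filter (fun w => ¬ c s(v, w) = 0) := by
      apply filter_congr
      intro x _
      have := (c s(v, x)).isLt
      simp only [Fin.ext_iff, Fin.val_one, Fin.val_zero, decide_eq_decide]
      omega
    rw [ha, hb, hcomp, Finset.card_filter_add_card_filter_not, hs, hv, deg3 h3]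
  have hc : cbp (hairyCycle n) c v = Multiset.filter (fun m => m ≠ 0) {a, b} := by
    have huniv : (Finset.univ : Finset (Fin 2)).val = ({0, 1} : Multiset (Fin 2)) := rfl
    unfold cbp
    rw [huniv]
    rfl
  rw [hc]
  have hcase : a = 0 ∧ b = 3 ∨ a = 1 ∧ b = 2 ∨ a = 2 ∧ b = 1 ∨ a = 3 ∧ b = 0 := by omega
  rcases hcase with ⟨h1, h2⟩ | ⟨h1, h2⟩ | ⟨h1, h2⟩ | ⟨h1, h2⟩ <;> rw [h1, h2] <;>
    first
      | (left; decide)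
      | (right; decide)
end

open Fin.NatCast

theorem hairy_odd_cycle_no_two_coloring (n : ℕ) (hodd : Odd n) (h3 : 3 ≤ n)
    (c : Sym2 (Fin n × Bool) → Fin 2) :
    ∃ p q, (hairyCycle n).Adj p q ∧ p.2 = false ∧ q.2 = false ∧
      cbp (hairyCycle n) c p = cbp (hairyCycle n) c q := by
  haveI : NeZero n := ⟨by omega⟩
  by_contra hcon
  push_neg at hcon
  have hne : ∀ j : Fin n, cbp (hairyCycle n) c (j, false) ≠ cbp (hairyCycle n) c (j + 1, false) :=
    fun j => hcon (j, false) (j + 1, false) (adj_succ h3 j) rfl rfl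
  set b' : Fin n → Bool := fun j => decide (cbp (hairyCycle n) c (j, false) = ({3} : Multiset ℕ))
    with hb'
  have hd : ({3} : Multiset ℕ) ≠ ({1, 2} : Multiset ℕ) := by decide
  have hflip : ∀ j : Fin n, b' (j + 1) = ! b' j := by
    intro j
    rcases cbp_cases h3 c j with h | h <;> rcases cbp_cases h3 c (j + 1) with h2 | h2 <;>
      simp only [hb', h, h2, decide_eq_true_eq]
    · exact absurd (h.trans h2.symm) (hne j)
    · decide
    · decide
    · exact absurd (h.trans h2.symm) (hne j)
  have key : ∀ m : ℕ, b' (m : Fin n) = xor (decide (Odd m)) (b' 0) := by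
    intro m
    induction m with
    | zero => simp
    | succ m ih =>
      have hcast : ((m + 1 : ℕ) : Fin n) = (m : Fin n) + 1 := by push_cast; ring
      rw [hcast, hflip, ih]
      have hdp : decide (Odd (m + 1)) = ! decide (Odd m) := by
        by_cases hq : Odd m <;> simp [Nat.odd_add_one, hq]
      rw [hdp]
      cases hx : decide (Odd m) <;> cases hy : b' 0 <;> rfl
  have := key n
  rw [Fin.natCast_self] at this
  rw [decide_eq_true hodd] at this
  cases hy : b' 0 <;> rw [hy] at this <;> simp at this
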